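/- For all positive reals α₀, …, α_n and real numbers t₀ < t_{n+1}, the iterated integral over the ordered simplex {t₀ ≤ t₁ ≤ … ≤ t_n ≤ t_{n+1}} of ∏_{i=0}^{n} (t_{i+1} - t_i)^{α_i - 1} dt₁⋯dt_n equals (t_{n+1} - t₀)^{(Σ_{i=0}^n α_i) - 1} · (∏_{i=0}^n Γ(α_i)) / Γ(Σ_{i=0}^n α_i). -/

import Mathlib

open MeasureTheory Real Set
open scoped ENNReal


lemma betaEqOn {s t : ℝ} : Set.EqOn (fun x : ℝ => ((x ^ (s - 1) * (1 - x) ^ (t - 1) : ℝ) : ℂ))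
      (fun x : ℝ => (x : ℂ) ^ ((s : ℂ) - 1) * ((1 : ℂ) - x) ^ ((t : ℂ) - 1))
      (Set.uIcc 0 1) := by
  intro x hx
  rw [Set.uIcc_of_le (by norm_num)] at hx
  have h1 : (0:ℝ) ≤ x := hx.1
  have h2 : (0:ℝ) ≤ 1 - x := by linarith [hx.2]
  simp only [Complex.ofReal_mul]
  rw [Complex.ofReal_cpow h1, Complex.ofReal_cpow h2]
  push_cast
  ring_nf

lemma beta01_integrable {s t : ℝ} (hs : 0 < s) (ht : 0 < t) :
    IntervalIntegrable (fun x : ℝ => x ^ (s - 1) * (1 - x) ^ (t - 1)) volume 0 1 := by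
  have hc := Complex.betaIntegral_convergent (u := s) (v := t) (by simpa) (by simpa)
  have hc' : IntervalIntegrable (fun x : ℝ => ((x ^ (s - 1) * (1 - x) ^ (t - 1) : ℝ) : ℂ))
      volume 0 1 := by
    apply hc.congr_ae
    refine (ae_restrict_iff' measurableSet_uIoc).2 (Filter.Eventually.of_forall fun x hx => ?_)
    exact (betaEqOn (uIoc_subset_uIcc hx)).symm
  rw [intervalIntegrable_iff] at hc' ⊢
  have := hc'.re
  apply this.congr
  filter_upwards [] with x
  simp
lemma beta01 {s t : ℝ} (hs : 0 < s) (ht : 0 < t) :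
    ∫ x in (0:ℝ)..1, x ^ (s - 1) * (1 - x) ^ (t - 1) = Gamma s * Gamma t / Gamma (s + t) := by
  have hst : (0:ℝ) < Gamma (s + t) := Real.Gamma_pos_of_pos (by linarith)
  have key := Complex.Gamma_mul_Gamma_eq_betaIntegral (s := s) (t := t) (by simpa) (by simpa)
  rw [Complex.betaIntegral] at key
  have : (∫ x in (0:ℝ)..1, (x : ℂ) ^ ((s:ℂ) - 1) * ((1:ℂ) - x) ^ ((t:ℂ) - 1))
      = ((∫ x in (0:ℝ)..1, x ^ (s - 1) * (1 - x) ^ (t - 1) : ℝ) : ℂ) := by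
    rw [← intervalIntegral.integral_ofReal]
    exact intervalIntegral.integral_congr betaEqOn.symm
  rw [this, ← Complex.ofReal_add, Complex.Gamma_ofReal, Complex.Gamma_ofReal,
    Complex.Gamma_ofReal, ← Complex.ofReal_mul, ← Complex.ofReal_mul] at key
  have := Complex.ofReal_injective key
  field_simp
  linarith [this]

lemma betaab_integrable {s t a b : ℝ} (hs : 0 < s) (ht : 0 < t) (hab : a < b) :
    IntervalIntegrable (fun x : ℝ => (x - a) ^ (s - 1) * (b - x) ^ (t - 1)) volume a b := by
  have hba : (0:ℝ) < b - a := by linarith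
  have h1 := ((beta01_integrable hs ht).comp_mul_right (c := (b - a)⁻¹))
  simp only [zero_div, one_div, inv_inv] at h1
  have h2 := h1.comp_sub_right a
  have hb : b - a + a = b := by ring
  rw [zero_add, hb] at h2
  have h3 := (h2.const_mul ((b - a) ^ (s - 1) * (b - a) ^ (t - 1)))
  apply h3.congr_ae
  refine (ae_restrict_iff' measurableSet_uIoc).2 (Filter.Eventually.of_forall fun x hx => ?_)
  rw [uIoc_of_le hab.le] at hx
  have hxa : (0:ℝ) ≤ x - a := by linarith [hx.1]
  have hxb : (0:ℝ) ≤ b - x := by linarith [hx.2]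
  have e1 : (x - a : ℝ) = (b - a) * ((x - a) * (b - a)⁻¹) := by field_simp
  have e2 : (b - x : ℝ) = (b - a) * (1 - (x - a) * (b - a)⁻¹) := by field_simp; try ring
  have hnn : (0:ℝ) ≤ 1 - (x - a) * (b - a)⁻¹ := by nlinarith [e2]
  calc ((b - a) ^ (s - 1) * (b - a) ^ (t - 1)) * (((x - a) * (b - a)⁻¹) ^ (s - 1) *
        (1 - (x - a) * (b - a)⁻¹) ^ (t - 1))
      = ((b - a) * ((x - a) * (b - a)⁻¹)) ^ (s - 1) *
        ((b - a) * (1 - (x - a) * (b - a)⁻¹)) ^ (t - 1) := by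
        rw [Real.mul_rpow hba.le (by positivity), Real.mul_rpow hba.le hnn]
        ring
    _ = (x - a) ^ (s - 1) * (b - x) ^ (t - 1) := by rw [← e1, ← e2]

lemma betaab {s t a b : ℝ} (hs : 0 < s) (ht : 0 < t) (hab : a < b) :
    ∫ x in a..b, (x - a) ^ (s - 1) * (b - x) ^ (t - 1)
      = (b - a) ^ (s + t - 1) * (Gamma s * Gamma t / Gamma (s + t)) := by
  have hba : (0:ℝ) < b - a := by linarith
  have congr1 : ∫ x in a..b, (x - a) ^ (s - 1) * (b - x) ^ (t - 1)
      = ∫ x in a..b, ((b - a) ^ (s - 1) * (b - a) ^ (t - 1)) *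
          (((x - a) / (b - a)) ^ (s - 1) * (1 - (x - a) / (b - a)) ^ (t - 1)) := by
    apply intervalIntegral.integral_congr
    intro x hx
    rw [uIcc_of_le hab.le] at hx
    have hxa : (0:ℝ) ≤ x - a := by linarith [hx.1]
    have hxb : (0:ℝ) ≤ b - x := by linarith [hx.2]
    have e1 : (x - a : ℝ) = (b - a) * ((x - a) / (b - a)) := by field_simp
    have e2 : (b - x : ℝ) = (b - a) * (1 - (x - a) / (b - a)) := by field_simp; try ring
    have hnn : (0:ℝ) ≤ 1 - (x - a) / (b - a) := by nlinarith [e2]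
    calc (x - a) ^ (s - 1) * (b - x) ^ (t - 1)
        = ((b - a) * ((x - a) / (b - a))) ^ (s - 1) *
          ((b - a) * (1 - (x - a) / (b - a))) ^ (t - 1) := by rw [← e1, ← e2]
      _ = _ := by
          rw [Real.mul_rpow hba.le (by positivity), Real.mul_rpow hba.le hnn]
          ring
  rw [congr1, intervalIntegral.integral_const_mul]
  have subst : (∫ x in a..b, ((x - a) / (b - a)) ^ (s - 1) * (1 - (x - a) / (b - a)) ^ (t - 1))
      = (b - a) * ∫ x in (0:ℝ)..1, x ^ (s - 1) * (1 - x) ^ (t - 1) := by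
    have h1 := intervalIntegral.integral_comp_sub_right
      (fun y : ℝ => (y / (b - a)) ^ (s - 1) * (1 - y / (b - a)) ^ (t - 1)) a (a := a) (b := b)
    rw [sub_self] at h1
    rw [h1]
    have h2 := intervalIntegral.integral_comp_div
      (fun y : ℝ => y ^ (s - 1) * (1 - y) ^ (t - 1)) (c := b - a) hba.ne' (a := 0) (b := b - a)
    rw [zero_div, div_self hba.ne'] at h2
    rw [h2, smul_eq_mul]
  rw [subst, beta01 hs ht]
  have hpow : (b - a) ^ (s - 1) * (b - a) ^ (t - 1) * (b - a) = (b - a) ^ (s + t - 1) := by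
    rw [← Real.rpow_add hba, ← Real.rpow_add_one hba.ne']
    congr 1
    ring
  rw [← hpow]
  ring

lemma betaIoo {s t a b : ℝ} (hs : 0 < s) (ht : 0 < t) (hab : a < b) :
    ∫⁻ x in Set.Ioo a b, ENNReal.ofReal ((x - a) ^ (s - 1) * (b - x) ^ (t - 1))
      = ENNReal.ofReal ((b - a) ^ (s + t - 1) * (Gamma s * Gamma t / Gamma (s + t))) := by
  have hint : IntegrableOn (fun x : ℝ => (x - a) ^ (s - 1) * (b - x) ^ (t - 1)) (Set.Ioo a b) := by
    refine ((betaab_integrable hs ht hab).def').mono_set ?_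
    rw [uIoc_of_le hab.le]; exact Set.Ioo_subset_Ioc_self
  rw [← ofReal_integral_eq_lintegral_ofReal hint]
  · congr 1
    rw [← MeasureTheory.integral_Ioc_eq_integral_Ioo, ← intervalIntegral.integral_of_le hab.le]
    exact betaab hs ht hab
  · refine (ae_restrict_iff' measurableSet_Ioo).2 (Filter.Eventually.of_forall fun x hx => ?_)
    have h1 : (0:ℝ) ≤ x - a := by linarith [hx.1]
    have h2 : (0:ℝ) ≤ b - x := by linarith [hx.2]
    positivity


noncomputable def ch (t0 T : ℝ) {n : ℕ} (t : Fin n → ℝ) : Fin (n + 2) → ℝ :=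
  Fin.snoc (Fin.cons t0 t) T

@[simp] lemma ch_zero (t0 T : ℝ) {n : ℕ} (t : Fin n → ℝ) : ch t0 T t 0 = t0 := by
  rw [ch, show (0 : Fin (n+2)) = Fin.castSucc 0 from rfl, Fin.snoc_castSucc, Fin.cons_zero]

@[simp] lemma ch_last (t0 T : ℝ) {n : ℕ} (t : Fin n → ℝ) : ch t0 T t (Fin.last (n+1)) = T := by
  simp [ch]

lemma ch_castSucc_succ (t0 T : ℝ) {n : ℕ} (t : Fin n → ℝ) (j : Fin n) :
    ch t0 T t (Fin.castSucc j).succ = t j := by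
  rw [ch, Fin.succ_castSucc, Fin.snoc_castSucc, Fin.cons_succ]

lemma ch_succ_succ (t0 T x : ℝ) {n : ℕ} (y : Fin n → ℝ) (k : Fin (n + 1)) :
    ch t0 T (Fin.cons x y) k.succ.succ = ch t0 T y k.succ := by
  induction k using Fin.lastCases with
  | last =>
      have h1 : (Fin.last n).succ.succ = Fin.last (n + 2) := rfl
      have h2 : (Fin.last n).succ = Fin.last (n + 1) := rfl
      rw [h1, h2, ch_last, ch_last]
  | cast j =>
      rw [ch_castSucc_succ, Fin.succ_castSucc, ch_castSucc_succ, Fin.cons_succ]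

lemma ch_one_cons (t0 T x : ℝ) {n : ℕ} (y : Fin n → ℝ) :
    ch t0 T (Fin.cons x y) 1 = x := by
  have : (1 : Fin (n+3)) = (Fin.castSucc 0).succ := rfl
  rw [this, ch_castSucc_succ, Fin.cons_zero]

lemma measurable_ch (t0 T : ℝ) {n : ℕ} (j : Fin (n + 2)) :
    Measurable fun t : Fin n → ℝ => ch t0 T t j := by
  induction j using Fin.lastCases with
  | last => simp only [ch, Fin.snoc_last]; exact measurable_const
  | cast k =>
      simp only [ch, Fin.snoc_castSucc]
      induction k using Fin.cases with
      | zero => simp only [Fin.cons_zero]; exact measurable_const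
      | succ i => simp only [Fin.cons_succ]; exact measurable_pi_apply i

lemma ch_cons_inner (t0 T x : ℝ) {n : ℕ} (y : Fin n → ℝ) (j : Fin n) :
    ch t0 T (Fin.cons x y) ((j.succ).succ).castSucc = ch t0 T y (j.succ).castSucc := by
  rw [← Fin.succ_castSucc, ← Fin.succ_castSucc, ch_succ_succ, Fin.succ_castSucc]

lemma ch_one (t0 T : ℝ) (t : Fin 0 → ℝ) : ch t0 T t 1 = T := by
  have : (1 : Fin 2) = Fin.last 1 := rfl
  rw [this, ch_last]

lemma ch_one_pos (t0 T : ℝ) {n : ℕ} (y : Fin (n+1) → ℝ) : ch t0 T y 1 = y 0 := by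
  have : (1 : Fin (n+3)) = (Fin.castSucc (0 : Fin (n+1))).succ := rfl
  rw [this, ch_castSucc_succ]

lemma mono_iff (t0 T x : ℝ) {n : ℕ} (y : Fin n → ℝ) :
    Monotone (ch t0 T (Fin.cons x y)) ↔
      (t0 ≤ x ∧ x ≤ ch t0 T y 1) ∧ Monotone (ch t0 T y) := by
  rw [Fin.monotone_iff_le_succ, Fin.monotone_iff_le_succ, Fin.forall_fin_succ,
    Fin.forall_fin_succ, Fin.forall_fin_succ]
  have e0 : (0 : Fin (n+2)).castSucc = 0 := rfl
  have e1 : (0 : Fin (n+2)).succ = 1 := rfl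
  have e2 : ((0 : Fin (n+1)).succ).castSucc = 1 := rfl
  have e3 : (0 : Fin (n+1)).succ = 1 := rfl
  have e4 : (0 : Fin (n+1)).castSucc = 0 := rfl
  constructor
  · rintro ⟨h1, h2, h3⟩
    rw [e0, ch_zero, e1, ch_one_cons] at h1
    rw [e2, ch_one_cons, ch_succ_succ, e3] at h2
    refine ⟨⟨h1, h2⟩, ?_, fun j => ?_⟩
    · rw [e4, ch_zero, e3]; linarith
    · have := h3 j
      rw [ch_cons_inner, ch_succ_succ] at this
      exact this
  · rintro ⟨⟨h1, h2⟩, h0, h3⟩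
    refine ⟨?_, ?_, fun j => ?_⟩
    · rw [e0, ch_zero, e1, ch_one_cons]; exact h1
    · rw [e2, ch_one_cons, ch_succ_succ, e3]; exact h2
    · rw [ch_cons_inner, ch_succ_succ]
      exact h3 j

lemma measurable_S (t0 T : ℝ) (n : ℕ) :
    MeasurableSet {t : Fin n → ℝ | Monotone (ch t0 T t)} := by
  have : {t : Fin n → ℝ | Monotone (ch t0 T t)}
      = ⋂ i : Fin (n+1), {t | ch t0 T t i.castSucc ≤ ch t0 T t i.succ} := by
    ext t; simp [Fin.monotone_iff_le_succ, Set.mem_iInter]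
  rw [this]
  exact MeasurableSet.iInter fun i =>
    measurableSet_le (measurable_ch _ _ _) (measurable_ch _ _ _)

lemma null_w (t0 T : ℝ) (h : t0 < T) (n : ℕ) :
    volume {y : Fin n → ℝ | ch t0 T y 1 = t0} = 0 := by
  cases n with
  | zero =>
      have : {y : Fin 0 → ℝ | ch t0 T y 1 = t0} = ∅ := by
        ext y; simp [ch_one, h.ne']
      simp [this]
  | succ m =>
      have : {y : Fin (m+1) → ℝ | ch t0 T y 1 = t0} = {y : Fin (m+1) → ℝ | y 0 = t0} := by
        ext y; rw [Set.mem_setOf_eq, ch_one_pos]; rfl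
      rw [this, volume_pi]
      exact Measure.pi_hyperplane (fun _ : Fin (m+1) => (volume : Measure ℝ)) 0 t0

lemma F_expand (t0 T : ℝ) {m : ℕ} (α : Fin (m + 2) → ℝ) (x : ℝ) (y : Fin m → ℝ) :
    ∏ i : Fin (m + 2), ENNReal.ofReal
        ((ch t0 T (Fin.cons x y) i.succ - ch t0 T (Fin.cons x y) i.castSucc) ^ (α i - 1))
      = ENNReal.ofReal ((x - t0) ^ (α 0 - 1)) *
          ENNReal.ofReal ((ch t0 T y 1 - x) ^ (α 1 - 1)) *
        ∏ j : Fin m, ENNReal.ofReal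
          ((ch t0 T y (j.succ).succ - ch t0 T y (j.succ).castSucc) ^ (α (j.succ).succ - 1)) := by
  rw [Fin.prod_univ_succ, Fin.prod_univ_succ, ← mul_assoc]
  congr 1
  · refine congrArg₂ (· * ·) (congrArg ENNReal.ofReal ?_) (congrArg ENNReal.ofReal ?_)
    · rw [show ((0 : Fin (m+2)).succ) = 1 from rfl,
        show ((0 : Fin (m+2)).castSucc) = 0 from rfl, ch_one_cons, ch_zero]
    · rw [show (((0 : Fin (m+1)).succ).castSucc) = (1 : Fin (m+3)) from rfl,
        ch_succ_succ, show ((0 : Fin (m+1)).succ) = 1 from rfl, ch_one_cons]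
  · exact Finset.prod_congr rfl fun j _ => by rw [ch_succ_succ, ch_cons_inner]


lemma measurable_rp {n : ℕ} (t0 T c : ℝ) (j k : Fin (n+2)) :
    Measurable fun t : Fin n → ℝ => ENNReal.ofReal ((ch t0 T t j - ch t0 T t k) ^ c) := by
  apply Measurable.ennreal_ofReal
  exact ((measurable_ch t0 T j).sub (measurable_ch t0 T k)).pow_const _

lemma measurable_F {n : ℕ} (t0 T : ℝ) (α : Fin (n+1) → ℝ) :
    Measurable fun t : Fin n → ℝ =>
      ∏ i : Fin (n+1), ENNReal.ofReal ((ch t0 T t i.succ - ch t0 T t i.castSucc) ^ (α i - 1)) :=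
  Finset.measurable_prod _ fun i _ => measurable_rp t0 T _ _ _

lemma main_lintegral (n : ℕ) (α : Fin (n + 1) → ℝ) (hα : ∀ i, 0 < α i)
    (t0 T : ℝ) (h : t0 < T) :
    ∫⁻ t in {t : Fin n → ℝ | Monotone (ch t0 T t)},
        ∏ i : Fin (n + 1),
          ENNReal.ofReal ((ch t0 T t i.succ - ch t0 T t i.castSucc) ^ (α i - 1))
      = ENNReal.ofReal ((T - t0) ^ ((∑ i, α i) - 1) *
          ((∏ i, Gamma (α i)) / Gamma (∑ i, α i))) := by
  induction n with
  | zero =>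
      have hset : {t : Fin 0 → ℝ | Monotone (ch t0 T t)} = Set.univ := by
        ext t
        simp only [Set.mem_setOf_eq, Set.mem_univ, iff_true, Fin.monotone_iff_le_succ]
        intro i
        have : i = 0 := Subsingleton.elim i 0
        subst this
        rw [show ((0 : Fin 1).castSucc) = (0 : Fin 2) from rfl, ch_zero,
          show ((0 : Fin 1).succ) = (1 : Fin 2) from rfl, ch_one]
        exact h.le
      have hprod : ∀ t : Fin 0 → ℝ,
          (∏ i : Fin 1, ENNReal.ofReal ((ch t0 T t i.succ - ch t0 T t i.castSucc) ^ (α i - 1)))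
            = ENNReal.ofReal ((T - t0) ^ (α 0 - 1)) := by
        intro t
        rw [Fin.prod_univ_one]
        rw [show ((0 : Fin 1).castSucc) = (0 : Fin 2) from rfl, ch_zero,
          show ((0 : Fin 1).succ) = (1 : Fin 2) from rfl, ch_one]
      rw [hset, Measure.restrict_univ]
      simp_rw [hprod]
      rw [lintegral_const]
      have hone : (volume : Measure (Fin 0 → ℝ)) Set.univ = 1 := by
        rw [volume_pi, Measure.pi_univ]
        simp
      rw [hone, mul_one, Fin.sum_univ_one, Fin.prod_univ_one]
      congr 1
      rw [div_self (Real.Gamma_pos_of_pos (hα 0)).ne']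
      · ring
  | succ m ih =>
      -- notation
      have hcons_meas : Measurable fun p : ℝ × (Fin m → ℝ) => (Fin.cons p.1 p.2 : Fin (m+1) → ℝ) := by
        rw [measurable_pi_iff]
        intro i
        induction i using Fin.cases with
        | zero => simpa using measurable_fst
        | succ j => simpa [Function.comp_def] using (measurable_pi_apply j).comp measurable_snd
      have hF : Measurable fun t : Fin (m+1) → ℝ =>
          ∏ i : Fin (m+2), ENNReal.ofReal ((ch t0 T t i.succ - ch t0 T t i.castSucc) ^ (α i - 1)) :=
        measurable_F t0 T α
      have hind : Measurable (Set.indicator {t : Fin (m+1) → ℝ | Monotone (ch t0 T t)}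
          (fun t => ∏ i : Fin (m+2), ENNReal.ofReal
            ((ch t0 T t i.succ - ch t0 T t i.castSucc) ^ (α i - 1)))) :=
        hF.indicator (measurable_S t0 T (m+1))
      -- Step 1 : Fubini
      have step1 : ∫⁻ t in {t : Fin (m+1) → ℝ | Monotone (ch t0 T t)},
          ∏ i : Fin (m+2), ENNReal.ofReal ((ch t0 T t i.succ - ch t0 T t i.castSucc) ^ (α i - 1))
          = ∫⁻ y : Fin m → ℝ, ∫⁻ x : ℝ,
              Set.indicator {t : Fin (m+1) → ℝ | Monotone (ch t0 T t)}
                (fun t => ∏ i : Fin (m+2), ENNReal.ofReal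
                  ((ch t0 T t i.succ - ch t0 T t i.castSucc) ^ (α i - 1)))
                (Fin.cons x y) := by
        rw [← lintegral_indicator (measurable_S t0 T (m+1))]
        have mp := (measurePreserving_piFinSuccAbove (fun _ : Fin (m+1) => (volume : Measure ℝ)) 0).symm
        rw [show (volume : Measure (Fin (m+1) → ℝ)) = Measure.pi fun _ => volume from volume_pi,
          ← mp.lintegral_comp hind]
        have hsymm : ∀ p : ℝ × (Fin m → ℝ),
            (MeasurableEquiv.piFinSuccAbove (fun _ : Fin (m+1) => ℝ) 0).symm p
              = Fin.cons p.1 p.2 := by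
          intro p
          simp [MeasurableEquiv.piFinSuccAbove_symm_apply, Fin.insertNthEquiv, Fin.insertNth_zero]
        simp_rw [hsymm]
        have hG : Measurable fun p : ℝ × (Fin m → ℝ) =>
            Set.indicator {t : Fin (m+1) → ℝ | Monotone (ch t0 T t)}
              (fun t => ∏ i : Fin (m+2), ENNReal.ofReal
                ((ch t0 T t i.succ - ch t0 T t i.castSucc) ^ (α i - 1)))
              (Fin.cons p.1 p.2) := hind.comp hcons_meas
        rw [show (Measure.pi fun _ : Fin m => (volume : Measure ℝ)) = volume from volume_pi.symm]
        exact lintegral_prod_symm' _ hG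
      -- Step 2 : inner integral over the first simplex variable
      have step2 : ∀ y : Fin m → ℝ,
          (∫⁻ x : ℝ, Set.indicator {t : Fin (m+1) → ℝ | Monotone (ch t0 T t)}
            (fun t => ∏ i : Fin (m+2), ENNReal.ofReal
              ((ch t0 T t i.succ - ch t0 T t i.castSucc) ^ (α i - 1))) (Fin.cons x y))
          = (∫⁻ x in Set.Ioo t0 (ch t0 T y 1),
              ENNReal.ofReal ((x - t0) ^ (α 0 - 1)) *
                ENNReal.ofReal ((ch t0 T y 1 - x) ^ (α 1 - 1))) *
            Set.indicator {y : Fin m → ℝ | Monotone (ch t0 T y)}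
              (fun y => ∏ j : Fin m, ENNReal.ofReal
                ((ch t0 T y (j.succ).succ - ch t0 T y (j.succ).castSucc) ^ (α (j.succ).succ - 1))) y := by
        intro y
        have hf1 : Measurable fun x : ℝ => ENNReal.ofReal ((x - t0) ^ (α 0 - 1)) *
            ENNReal.ofReal ((ch t0 T y 1 - x) ^ (α 1 - 1)) :=
          (((measurable_id.sub_const t0).pow_const _).ennreal_ofReal).mul
            (((measurable_const.sub measurable_id).pow_const _).ennreal_ofReal)
        rw [← lintegral_indicator measurableSet_Ioo,
          ← lintegral_mul_const _ (hf1.indicator measurableSet_Ioo)]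
        apply lintegral_congr_ae
        have hnull : volume ({t0, ch t0 T y 1} : Set ℝ) = 0 :=
          Set.Finite.measure_zero (Set.toFinite _) volume
        filter_upwards [compl_mem_ae_iff.2 hnull] with x hx
        have hxne1 : x ≠ t0 := fun hc => hx (by simp [hc])
        have hxne2 : x ≠ ch t0 T y 1 := fun hc => hx (by simp [hc])
        by_cases hmem : Monotone (ch t0 T (Fin.cons x y))
        · obtain ⟨⟨h1, h2⟩, hmon⟩ := (mono_iff t0 T x y).1 hmem
          rw [Set.indicator_of_mem (show Fin.cons x y ∈ {t : Fin (m+1) → ℝ | Monotone (ch t0 T t)} from hmem),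
            Set.indicator_of_mem (show x ∈ Set.Ioo t0 (ch t0 T y 1) from
              ⟨lt_of_le_of_ne h1 (Ne.symm hxne1), lt_of_le_of_ne h2 hxne2⟩),
            Set.indicator_of_mem (show y ∈ {y : Fin m → ℝ | Monotone (ch t0 T y)} from hmon)]
          exact F_expand t0 T α x y
        · rw [Set.indicator_of_notMem
            (show Fin.cons x y ∉ {t : Fin (m+1) → ℝ | Monotone (ch t0 T t)} from hmem)]
          by_cases hmon : Monotone (ch t0 T y)
          · have hxIcc : ¬(t0 ≤ x ∧ x ≤ ch t0 T y 1) :=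
              fun hc => hmem ((mono_iff t0 T x y).2 ⟨hc, hmon⟩)
            rw [Set.indicator_of_notMem (show x ∉ Set.Ioo t0 (ch t0 T y 1) from
              fun hc => hxIcc ⟨hc.1.le, hc.2.le⟩), zero_mul]
          · rw [Set.indicator_of_notMem
              (show y ∉ {y : Fin m → ℝ | Monotone (ch t0 T y)} from hmon), mul_zero]
      -- the new exponent vector
      set α' : Fin (m+1) → ℝ := Fin.cons (α 0 + α 1) (fun j => α (j.succ).succ) with hα'def
      have hα' : ∀ i, 0 < α' i := by
        intro i
        induction i using Fin.cases with
        | zero => simpa [hα'def] using add_pos (hα 0) (hα 1)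
        | succ j => simpa [hα'def] using hα _
      have hRmeas : Measurable fun y : Fin m → ℝ => ∏ j : Fin m, ENNReal.ofReal
          ((ch t0 T y (j.succ).succ - ch t0 T y (j.succ).castSucc) ^ (α (j.succ).succ - 1)) :=
        Finset.measurable_prod _ fun j _ => measurable_rp t0 T _ _ _
      have hB : (0:ℝ) < Gamma (α 0) * Gamma (α 1) / Gamma (α 0 + α 1) := by
        have g0 := Real.Gamma_pos_of_pos (hα 0)
        have g1 := Real.Gamma_pos_of_pos (hα 1)
        have g2 := Real.Gamma_pos_of_pos (add_pos (hα 0) (hα 1))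
        positivity
      -- Step 3 : evaluate the inner Beta integral, a.e. in the outer variable
      have step3 : (fun y : Fin m → ℝ =>
          (∫⁻ x in Set.Ioo t0 (ch t0 T y 1),
              ENNReal.ofReal ((x - t0) ^ (α 0 - 1)) *
                ENNReal.ofReal ((ch t0 T y 1 - x) ^ (α 1 - 1))) *
            Set.indicator {y : Fin m → ℝ | Monotone (ch t0 T y)}
              (fun y => ∏ j : Fin m, ENNReal.ofReal
                ((ch t0 T y (j.succ).succ - ch t0 T y (j.succ).castSucc) ^ (α (j.succ).succ - 1))) y)
          =ᵐ[volume] (fun y : Fin m → ℝ =>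
            ENNReal.ofReal (Gamma (α 0) * Gamma (α 1) / Gamma (α 0 + α 1)) *
            Set.indicator {y : Fin m → ℝ | Monotone (ch t0 T y)}
              (fun y => ENNReal.ofReal ((ch t0 T y 1 - t0) ^ (α 0 + α 1 - 1)) *
                ∏ j : Fin m, ENNReal.ofReal
                  ((ch t0 T y (j.succ).succ - ch t0 T y (j.succ).castSucc) ^ (α (j.succ).succ - 1))) y) := by
        filter_upwards [compl_mem_ae_iff.2 (null_w t0 T h m)] with y hy
        by_cases hmon : Monotone (ch t0 T y)
        · have hyne : ch t0 T y 1 ≠ t0 := hy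
          have h0le : t0 ≤ ch t0 T y 1 := by
            have := hmon (show (0 : Fin (m+2)) ≤ 1 from Fin.zero_le 1)
            rwa [ch_zero] at this
          have hlt : t0 < ch t0 T y 1 := lt_of_le_of_ne h0le (Ne.symm hyne)
          rw [Set.indicator_of_mem (show y ∈ {y : Fin m → ℝ | Monotone (ch t0 T y)} from hmon),
            Set.indicator_of_mem (show y ∈ {y : Fin m → ℝ | Monotone (ch t0 T y)} from hmon)]
          have hcong : (∫⁻ x in Set.Ioo t0 (ch t0 T y 1),
              ENNReal.ofReal ((x - t0) ^ (α 0 - 1)) *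
                ENNReal.ofReal ((ch t0 T y 1 - x) ^ (α 1 - 1)))
              = ∫⁻ x in Set.Ioo t0 (ch t0 T y 1),
                  ENNReal.ofReal ((x - t0) ^ (α 0 - 1) * (ch t0 T y 1 - x) ^ (α 1 - 1)) := by
            refine setLIntegral_congr_fun measurableSet_Ioo (fun x hx => ?_)
            rw [ENNReal.ofReal_mul (Real.rpow_nonneg (by linarith [hx.1]) _)]
          rw [hcong, betaIoo (hα 0) (hα 1) hlt,
            ENNReal.ofReal_mul (Real.rpow_nonneg (by linarith) _)]
          ring
        · rw [Set.indicator_of_notMem (show y ∉ {y : Fin m → ℝ | Monotone (ch t0 T y)} from hmon),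
            Set.indicator_of_notMem (show y ∉ {y : Fin m → ℝ | Monotone (ch t0 T y)} from hmon),
            mul_zero, mul_zero]
      -- Step 4 : assemble everything
      rw [step1]
      simp_rw [step2]
      rw [lintegral_congr_ae step3]
      have hmeas4 : Measurable fun y : Fin m → ℝ =>
          Set.indicator {y : Fin m → ℝ | Monotone (ch t0 T y)}
            (fun y => ENNReal.ofReal ((ch t0 T y 1 - t0) ^ (α 0 + α 1 - 1)) *
              ∏ j : Fin m, ENNReal.ofReal
                ((ch t0 T y (j.succ).succ - ch t0 T y (j.succ).castSucc) ^ (α (j.succ).succ - 1))) y :=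
        (((((measurable_ch t0 T 1).sub_const t0).pow_const _).ennreal_ofReal).mul hRmeas).indicator
          (measurable_S t0 T m)
      rw [lintegral_const_mul _ hmeas4, lintegral_indicator (measurable_S t0 T m)]
      have hprod' : ∀ y : Fin m → ℝ,
          ENNReal.ofReal ((ch t0 T y 1 - t0) ^ (α 0 + α 1 - 1)) *
            (∏ j : Fin m, ENNReal.ofReal
              ((ch t0 T y (j.succ).succ - ch t0 T y (j.succ).castSucc) ^ (α (j.succ).succ - 1)))
          = ∏ i : Fin (m+1), ENNReal.ofReal
              ((ch t0 T y i.succ - ch t0 T y i.castSucc) ^ (α' i - 1)) := by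
        intro y
        rw [Fin.prod_univ_succ, show ((0 : Fin (m+1)).succ) = 1 from rfl,
          show ((0 : Fin (m+1)).castSucc) = 0 from rfl, ch_zero, hα'def]
        simp only [Fin.cons_zero, Fin.cons_succ]
      simp_rw [hprod']
      rw [ih α' hα']
      have hsum : ∑ i : Fin (m+1), α' i = ∑ i : Fin (m+2), α i := by
        rw [Fin.sum_univ_succ, Fin.sum_univ_succ (f := α),
          Fin.sum_univ_succ (f := fun i : Fin (m+1) => α i.succ)]
        simp only [hα'def, Fin.cons_zero, Fin.cons_succ, Fin.succ_zero_eq_one]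
        ring
      have hprodΓ : ∏ i : Fin (m+1), Gamma (α' i)
          = Gamma (α 0 + α 1) * ∏ j : Fin m, Gamma (α (j.succ).succ) := by
        rw [Fin.prod_univ_succ]
        simp [hα'def]
      rw [hsum, ← ENNReal.ofReal_mul hB.le]
      congr 1
      rw [hprodΓ]
      have hΓ : Gamma (α 0 + α 1) ≠ 0 := (Real.Gamma_pos_of_pos (add_pos (hα 0) (hα 1))).ne'
      have hΓs : Gamma (∑ i : Fin (m+2), α i) ≠ 0 := by
        refine (Real.Gamma_pos_of_pos ?_).ne'
        exact Finset.sum_pos (fun i _ => hα i) Finset.univ_nonempty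
      have hprodα : ∏ i : Fin (m+2), Gamma (α i)
          = Gamma (α 0) * (Gamma (α 1) * ∏ j : Fin m, Gamma (α (j.succ).succ)) := by
        rw [Fin.prod_univ_succ, Fin.prod_univ_succ (f := fun i : Fin (m+1) => Gamma (α i.succ))]
        simp [Fin.succ_zero_eq_one]
      rw [hprodα]
      field_simp



/-- generalized Beta integral over the ordered simplex. -/
theorem stmt1 (n : ℕ) (α : Fin (n + 1) → ℝ) (hα : ∀ i, 0 < α i)
    (t0 T : ℝ) (h : t0 < T) :
    (∫ t in {t : Fin n → ℝ | Monotone (Fin.snoc (Fin.cons t0 t : Fin (n + 1) → ℝ) T)},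
        ∏ i : Fin (n + 1),
          ((Fin.snoc (Fin.cons t0 t : Fin (n + 1) → ℝ) T : Fin (n + 2) → ℝ) i.succ -
            (Fin.snoc (Fin.cons t0 t : Fin (n + 1) → ℝ) T : Fin (n + 2) → ℝ) i.castSucc)
            ^ (α i - 1)) =
      (T - t0) ^ ((∑ i, α i) - 1) *
        ((∏ i, Real.Gamma (α i)) / Real.Gamma (∑ i, α i)) := by
  have hS := measurable_S t0 T n
  have key := main_lintegral n α hα t0 T h
  show (∫ t in {t : Fin n → ℝ | Monotone (ch t0 T t)},
      ∏ i : Fin (n + 1), ((ch t0 T t i.succ - ch t0 T t i.castSucc) ^ (α i - 1)))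
    = (T - t0) ^ ((∑ i, α i) - 1) * ((∏ i, Real.Gamma (α i)) / Real.Gamma (∑ i, α i))
  have hnonneg : 0 ≤ᵐ[volume.restrict {t : Fin n → ℝ | Monotone (ch t0 T t)}]
      fun t : Fin n → ℝ =>
        ∏ i : Fin (n+1), ((ch t0 T t i.succ - ch t0 T t i.castSucc) ^ (α i - 1)) := by
    refine (ae_restrict_iff' hS).2 (ae_of_all _ fun t ht => ?_)
    refine Finset.prod_nonneg fun i _ => Real.rpow_nonneg ?_ _
    have := ht (Fin.castSucc_lt_succ (i := i)).le
    linarith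
  have hmeas : AEStronglyMeasurable (fun t : Fin n → ℝ =>
      ∏ i : Fin (n+1), ((ch t0 T t i.succ - ch t0 T t i.castSucc) ^ (α i - 1)))
      (volume.restrict {t : Fin n → ℝ | Monotone (ch t0 T t)}) :=
    (Finset.measurable_prod _ fun i _ =>
      ((measurable_ch t0 T _).sub (measurable_ch t0 T _)).pow_const _).aestronglyMeasurable
  rw [integral_eq_lintegral_of_nonneg_ae hnonneg hmeas]
  have hcong : ∫⁻ t in {t : Fin n → ℝ | Monotone (ch t0 T t)},
      ENNReal.ofReal (∏ i : Fin (n+1), ((ch t0 T t i.succ - ch t0 T t i.castSucc) ^ (α i - 1)))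
      = ∫⁻ t in {t : Fin n → ℝ | Monotone (ch t0 T t)},
          ∏ i : Fin (n+1), ENNReal.ofReal ((ch t0 T t i.succ - ch t0 T t i.castSucc) ^ (α i - 1)) := by
    refine setLIntegral_congr_fun hS (fun t ht => ?_)
    refine ENNReal.ofReal_prod_of_nonneg fun i _ => Real.rpow_nonneg ?_ _
    have := ht (Fin.castSucc_lt_succ (i := i)).le
    linarith
  rw [hcong, key, ENNReal.toReal_ofReal]
  have hΓpos : ∀ i : Fin (n+1), 0 < Real.Gamma (α i) := fun i => Real.Gamma_pos_of_pos (hα i)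
  have hΓs : 0 < Real.Gamma (∑ i, α i) :=
    Real.Gamma_pos_of_pos (Finset.sum_pos (fun i _ => hα i) Finset.univ_nonempty)
  exact mul_nonneg (Real.rpow_nonneg (by linarith) _)
    (div_nonneg (Finset.prod_nonneg fun i _ => (hΓpos i).le) hΓs.le)
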